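/- arXiv:2507.07022 — 2 statements merged into one kernel-verified Lean document; each statement's English description precedes it below -/
import Mathlib

section
/- Suppose that j_i <= t_1 + ... + t_i for all i = 1,...,d-1. Then for every associated prime P of S/B_t(u), exactly one of the variables x_{j_1},...,x_{j_d} belongs to P; consequently u belongs to P but not to P^2, for every associated prime P of S/B_t(u). -/
open Finset MvPolynomial

/-! Common definitions for principal vector-spread Borel ideals
(Crupi–Ficarra–Lax, "Principal vector-spread Borel ideals").

Throughout, `S = K[x_1,…,x_n]` is realized as `MvPolynomial (Fin n) K`, and the
variable `x_p` (1-based position `p ∈ [1,n]`) is `X (p-1)`. -/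

/-- The variable `x_p` of `K[x_1,…,x_n]`, for a 1-based position `p ∈ [1,n]`. -/
noncomputable def xv (K : Type*) [Field K] (n : ℕ) [NeZero n] (p : ℕ) :
    MvPolynomial (Fin n) K := MvPolynomial.X (Fin.ofNat n (p - 1 : ℕ))

/-- The squarefree monomial `x_{i 1} ⋯ x_{i e}` determined by the index function `i`. -/
noncomputable def monOf (K : Type*) [Field K] (n : ℕ) [NeZero n] (e : ℕ) (i : ℕ → ℕ) :
    MvPolynomial (Fin n) K := ∏ r ∈ Finset.Icc 1 e, xv K n (i r)

/-- Index functions of the `t`-spread monomials `x_{i 1} ⋯ x_{i e}` with `i r ≤ J r` for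
all `r = 1,…,e`.  (These monomials form the minimal monomial generating set of the
principal `t`-spread Borel ideal `B_t(x_{J 1} ⋯ x_{J e})`.) -/
def spreadIdx (e : ℕ) (t J : ℕ → ℕ) : Set (ℕ → ℕ) :=
  {i | (∀ r, 1 ≤ r → r ≤ e → 1 ≤ i r ∧ i r ≤ J r) ∧
    (∀ r, 1 ≤ r → r + 1 ≤ e → i r + t r ≤ i (r + 1))}

/-- The principal `t`-spread Borel ideal `B_t(x_{J 1} ⋯ x_{J e})`: the ideal generated by
all `t`-spread monomials `x_{i 1} ⋯ x_{i e}` with `i r ≤ J r` for all `r`. -/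
noncomputable def tBorel (K : Type*) [Field K] (n : ℕ) [NeZero n] (e : ℕ) (t J : ℕ → ℕ) :
    Ideal (MvPolynomial (Fin n) K) :=
  Ideal.span ((fun i => monOf K n e i) '' spreadIdx e t J)

/-- The monomial prime ideal `P_A = (x_p : p ∈ A)`, for a set `A` of 1-based positions. -/
noncomputable def pA (K : Type*) [Field K] (n : ℕ) [NeZero n] (A : Set ℕ) :
    Ideal (MvPolynomial (Fin n) K) := Ideal.span (xv K n '' A)

/-- The `t`-spread support `supp_t(x_{i 1} ⋯ x_{i e}) = ⋃_{s=1}^{e-1} [i s, i s + t s - 1]`. -/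
def tSupp (e : ℕ) (t : ℕ → ℕ) (i : ℕ → ℕ) : Set ℕ :=
  ⋃ s ∈ Finset.Icc 1 (e - 1), Set.Icc (i s) (i s + t s - 1)

/-- The `k`-th symbolic power of a (squarefree monomial) ideal: the intersection of the
`k`-th powers of its minimal primes. -/
noncomputable def symbPow {R : Type*} [CommRing R] (I : Ideal R) (k : ℕ) : Ideal R :=
  ⨅ P ∈ I.minimalPrimes, P ^ k

/-- The Alexander dual `⨅_{v} P_{supp v}` of the squarefree monomial ideal whose minimal
monomial generators are the degree `e` squarefree monomials indexed by `gen`. -/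
noncomputable def alexDualOf (K : Type*) [Field K] (n : ℕ) [NeZero n] (e : ℕ)
    (gen : Set (ℕ → ℕ)) : Ideal (MvPolynomial (Fin n) K) :=
  ⨅ i ∈ gen, pA K n (i '' Set.Icc 1 e)

/-- The height of an ideal: the infimum of the heights of its minimal primes, the height
of a prime being its height in the poset of prime ideals. -/
noncomputable def idealHeight {R : Type*} [CommRing R] (I : Ideal R) : ℕ∞ :=
  ⨅ (p : PrimeSpectrum R) (_ : p.asIdeal ∈ I.minimalPrimes), Order.height p

/-- The depth of the module `M` with respect to the ideal `P`: the supremum of the lengths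
of `M`-regular sequences consisting of elements of `P`. -/
noncomputable def depthWrt (R : Type*) (M : Type*) [CommRing R] [AddCommGroup M]
    [Module R M] (P : Ideal R) : ℕ∞ :=
  ⨆ (k : ℕ) (_ : ∃ x : Fin k → R, (∀ a, x a ∈ P) ∧
    RingTheory.Sequence.IsRegular M (List.ofFn x)), (k : ℕ∞)

/-- The (Krull) dimension of a module `M`: the Krull dimension of `R / ann M`. -/
noncomputable def modKrullDim (R : Type*) (M : Type*) [CommRing R] [AddCommGroup M]
    [Module R M] : WithBot ℕ∞ := ringKrullDim (R ⧸ Module.annihilator R M)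

/-- A module is Cohen–Macaulay (with respect to the ideal `P`, e.g. the graded maximal
ideal) if its depth equals its Krull dimension. -/
def IsCohenMacaulayMod (R : Type*) (M : Type*) [CommRing R] [AddCommGroup M] [Module R M]
    (P : Ideal R) : Prop := (depthWrt R M P : WithBot ℕ∞) = modKrullDim R M

/-- The depth of a local ring: max length of a regular sequence in the maximal ideal. -/
noncomputable def ringDepth (A : Type*) [CommRing A] [IsLocalRing A] : ℕ∞ :=
  depthWrt A A (IsLocalRing.maximalIdeal A)

/-- A local ring is Cohen–Macaulay if its depth equals its Krull dimension. -/
def IsCohenMacaulayLocalRing (A : Type*) [CommRing A] [IsLocalRing A] : Prop :=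
  (ringDepth A : WithBot ℕ∞) = ringKrullDim A

/-- A (commutative Noetherian) ring is Cohen–Macaulay if all its localizations at prime
ideals are Cohen–Macaulay local rings. -/
def IsCohenMacaulayRing (A : Type*) [CommRing A] : Prop :=
  ∀ (P : Ideal A) (hP : P.IsPrime), haveI := hP
    IsCohenMacaulayLocalRing (Localization.AtPrime P)

/-- The analytic spread of `I`: the Krull dimension of `R(I)/m R(I)`, where `R(I)` is the
Rees algebra of `I` and `m` the (graded maximal) ideal. -/
noncomputable def analyticSpread {R : Type*} [CommRing R] (m I : Ideal R) : WithBot ℕ∞ :=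
  ringKrullDim (↥(reesAlgebra I) ⧸ Ideal.map (algebraMap R ↥(reesAlgebra I)) m)

/-- `{p,q}` is an edge of the linear relation graph of the monomial ideal whose minimal
generators are the degree `e` squarefree monomials indexed by `gen` (positions 1-based,
within `[1,n]`). -/
def lrEdge (K : Type*) [Field K] (n : ℕ) [NeZero n] (e : ℕ) (gen : Set (ℕ → ℕ))
    (p q : ℕ) : Prop :=
  1 ≤ p ∧ p ≤ n ∧ 1 ≤ q ∧ q ≤ n ∧ p ≠ q ∧
    ∃ i ∈ gen, ∃ i' ∈ gen, xv K n p * monOf K n e i = xv K n q * monOf K n e i'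

/-- A facet of a simplicial complex: a maximal face. -/
def isFacet (Δ : Set (Finset ℕ)) (F : Finset ℕ) : Prop :=
  F ∈ Δ ∧ ∀ G ∈ Δ, F ⊆ G → F = G

/-- Vertex decomposability of a simplicial complex (faces as finsets of vertices):
either a simplex (including the void complex and `{∅}`), or there is a vertex whose
deletion and link are vertex decomposable and every facet of the deletion is a facet. -/
inductive VDecomp : Set (Finset ℕ) → Prop
  | empty : VDecomp ∅
  | simplex (A : Finset ℕ) : VDecomp {F | F ⊆ A}
  | step (Δ : Set (Finset ℕ)) (v : ℕ) (hv : ∃ F ∈ Δ, v ∈ F)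
      (hdel : VDecomp {F ∈ Δ | v ∉ F})
      (hlink : VDecomp {F | F ∈ Δ ∧ v ∉ F ∧ insert v F ∈ Δ})
      (hfac : ∀ F, isFacet {F ∈ Δ | v ∉ F} F → isFacet Δ F) : VDecomp Δ

/-- The `a`-th layer `J (a+1) / J a` of a filtration of ideals, as an `R`-module. -/
abbrev layerOf {R : Type*} [CommRing R] {r : ℕ} (J : Fin (r + 1) → Ideal R) (a : Fin r) :=
  ↥(J a.succ) ⧸ (Submodule.comap (J a.succ).subtype (J a.castSucc))

namespace CFL
set_option linter.unusedSectionVars false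

variable {K : Type*} [Field K] {n : ℕ} [NeZero n]

/-- 0-based variable index of 1-based position `p`. -/
def iota (n : ℕ) [NeZero n] (p : ℕ) : Fin n := Fin.ofNat n (p - 1 : ℕ)

/-- Exponent vector of the squarefree monomial `monOf K n d i`. -/
noncomputable def DD (n : ℕ) [NeZero n] (d : ℕ) (i : ℕ → ℕ) : Fin n →₀ ℕ :=
  ∑ r ∈ Finset.Icc 1 d, Finsupp.single (iota n (i r)) 1

lemma iota_inj {p q : ℕ} (hp1 : 1 ≤ p) (hpn : p ≤ n) (hq1 : 1 ≤ q) (hqn : q ≤ n)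
    (h : iota n p = iota n q) : p = q := by
  have hn : 0 < n := Nat.pos_of_ne_zero (NeZero.ne n)
  have := congrArg Fin.val h
  rw [iota, iota, Fin.val_ofNat, Fin.val_ofNat, Nat.mod_eq_of_lt (by omega),
    Nat.mod_eq_of_lt (by omega)] at this
  omega

lemma DD_apply (d : ℕ) (i : ℕ → ℕ) (c : Fin n) :
    DD n d i c = ∑ r ∈ Finset.Icc 1 d, if iota n (i r) = c then 1 else 0 := by
  classical
  rw [DD, Finsupp.finset_sum_apply]
  exact Finset.sum_congr rfl fun r _ => Finsupp.single_apply

lemma DD_hit (d : ℕ) (i : ℕ → ℕ) {r : ℕ} (hr : r ∈ Finset.Icc 1 d) :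
    1 ≤ DD n d i (iota n (i r)) := by
  classical
  rw [DD_apply]
  have h := Finset.single_le_sum (f := fun s => if iota n (i s) = iota n (i r) then (1:ℕ) else 0)
    (fun _ _ => by positivity) hr
  simpa using h

lemma DD_eq_zero (d : ℕ) (i : ℕ → ℕ) {c : Fin n}
    (h : ∀ r ∈ Finset.Icc 1 d, iota n (i r) ≠ c) : DD n d i c = 0 := by
  classical
  rw [DD_apply]
  exact Finset.sum_eq_zero fun r hr => by simp [h r hr]

lemma DD_exists {d : ℕ} {i : ℕ → ℕ} {c : Fin n} (h : DD n d i c ≠ 0) :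
    ∃ r ∈ Finset.Icc 1 d, iota n (i r) = c := by
  by_contra hn
  push_neg at hn
  exact h (DD_eq_zero d i hn)

lemma DD_le_one {d : ℕ} {i : ℕ → ℕ}
    (hinj : ∀ r ∈ Finset.Icc 1 d, ∀ s ∈ Finset.Icc 1 d, iota n (i r) = iota n (i s) → r = s)
    (c : Fin n) : DD n d i c ≤ 1 := by
  classical
  rw [DD_apply]
  by_cases h : ∃ r ∈ Finset.Icc 1 d, iota n (i r) = c
  · obtain ⟨r₀, hr₀, he⟩ := h
    rw [Finset.sum_eq_single_of_mem r₀ hr₀ (fun r hr hne => by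
      rw [if_neg]
      intro he'
      exact hne (hinj r hr r₀ hr₀ (he'.trans he.symm)))]
    split <;> omega
  · push_neg at h
    rw [Finset.sum_eq_zero fun r hr => by simp [h r hr]]
    omega

lemma DD_le_of {d : ℕ} {i : ℕ → ℕ} {μ : Fin n →₀ ℕ}
    (hinj : ∀ r ∈ Finset.Icc 1 d, ∀ s ∈ Finset.Icc 1 d, iota n (i r) = iota n (i s) → r = s)
    (h : ∀ r ∈ Finset.Icc 1 d, 1 ≤ μ (iota n (i r))) : DD n d i ≤ μ := by
  rw [Finsupp.le_def]
  intro c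
  by_cases hz : DD n d i c = 0
  · omega
  · obtain ⟨r, hr, he⟩ := DD_exists hz
    have h1 := DD_le_one hinj c
    have h2 := h r hr
    rw [he] at h2
    omega

section spread

variable {d : ℕ} {t j : ℕ → ℕ}

lemma spread_strict (ht : ∀ k, 1 ≤ k → k ≤ d - 1 → 1 ≤ t k) {i : ℕ → ℕ}
    (hi : i ∈ spreadIdx d t j) :
    ∀ r s, 1 ≤ r → r < s → s ≤ d → i r < i s := by
  intro r s hr1 hrs hsd
  induction s with
  | zero => omega
  | succ s ih =>
    have hstep : ∀ s', 1 ≤ s' → s' + 1 ≤ d → i s' < i (s' + 1) := by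
      intro s' h1 h2
      have := hi.2 s' h1 h2
      have := ht s' h1 (by omega)
      omega
    rcases Nat.lt_or_ge r s with h | h
    · have := ih h (by omega)
      have := hstep s (by omega) (by omega)
      omega
    · have : r = s := by omega
      subst this
      exact hstep r hr1 (by omega)

lemma spread_lower {i : ℕ → ℕ} (hi : i ∈ spreadIdx d t j) :
    ∀ r, r + 1 ≤ d → 1 + ∑ s ∈ Finset.Icc 1 r, t s ≤ i (r + 1) := by
  intro r
  induction r with
  | zero =>
    intro h
    simpa using (hi.1 1 le_rfl h).1
  | succ r ih =>
    intro h
    rw [Finset.sum_Icc_succ_top (by omega)]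
    have h1 := ih (by omega)
    have h2 := hi.2 (r + 1) (by omega) (by omega)
    omega

lemma slot (hjmono : ∀ p q, 1 ≤ p → p < q → q ≤ d → j p < j q)
    (hc : ∀ r, 1 ≤ r → r ≤ d - 1 → j r ≤ ∑ s ∈ Finset.Icc 1 r, t s)
    {i : ℕ → ℕ} (hi : i ∈ spreadIdx d t j) {r m : ℕ}
    (hr1 : 1 ≤ r) (hrd : r ≤ d) (hm1 : 1 ≤ m) (hmd : m ≤ d) (he : i r = j m) : r = m := by
  by_contra hne
  rcases Nat.lt_or_ge r m with h | h
  · have h1 := (hi.1 r hr1 hrd).2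
    have h2 := hjmono r m hr1 h hmd
    omega
  · have hmr : m < r := by omega
    have h1 := spread_lower hi (r - 1) (by omega)
    rw [show r - 1 + 1 = r by omega] at h1
    have h2 : ∑ s ∈ Finset.Icc 1 m, t s ≤ ∑ s ∈ Finset.Icc 1 (r - 1), t s :=
      Finset.sum_le_sum_of_subset (Finset.Icc_subset_Icc_right (by omega))
    have h3 := hc m hm1 (by omega)
    omega

lemma min_mem {i i' : ℕ → ℕ} (hi : i ∈ spreadIdx d t j) (hi' : i' ∈ spreadIdx d t j) :
    (fun r => min (i r) (i' r)) ∈ spreadIdx d t j := by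
  refine ⟨fun r h1 h2 => ⟨le_min (hi.1 r h1 h2).1 (hi'.1 r h1 h2).1,
    le_trans (min_le_left _ _) (hi.1 r h1 h2).2⟩, fun r h1 h2 => ?_⟩
  have := hi.2 r h1 h2
  have := hi'.2 r h1 h2
  simp only
  omega

end spread

section withj

variable {d : ℕ} {t j : ℕ → ℕ}
variable (ht : ∀ k, 1 ≤ k → k ≤ d - 1 → 1 ≤ t k)
variable (hj1 : 1 ≤ j 1) (hjmono : ∀ p q, 1 ≤ p → p < q → q ≤ d → j p < j q)
variable (hjd : j d = n)
variable (hc : ∀ r, 1 ≤ r → r ≤ d - 1 → j r ≤ ∑ s ∈ Finset.Icc 1 r, t s)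

include hjmono hjd in
lemma j_le_n {r : ℕ} (h1 : 1 ≤ r) (h2 : r ≤ d) : j r ≤ n := by
  rcases Nat.lt_or_ge r d with h | h
  · have := hjmono r d h1 h d.le_refl
    omega
  · have : r = d := by omega
    subst this
    omega

include hj1 hjmono in
lemma j_pos {r : ℕ} (h1 : 1 ≤ r) (h2 : r ≤ d) : 1 ≤ j r := by
  rcases Nat.lt_or_ge 1 r with h | h
  · have := hjmono 1 r le_rfl h h2
    omega
  · have : r = 1 := by omega
    subst this
    exact hj1

include hjmono hjd in
lemma sp_bounds {i : ℕ → ℕ} (hi : i ∈ spreadIdx d t j) {r : ℕ}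
    (h1 : 1 ≤ r) (h2 : r ≤ d) : 1 ≤ i r ∧ i r ≤ n :=
  ⟨(hi.1 r h1 h2).1, le_trans (hi.1 r h1 h2).2 (j_le_n hjmono hjd h1 h2)⟩

include ht hjmono hjd in
lemma sp_inj {i : ℕ → ℕ} (hi : i ∈ spreadIdx d t j) :
    ∀ r ∈ Finset.Icc 1 d, ∀ s ∈ Finset.Icc 1 d,
      iota n (i r) = iota n (i s) → r = s := by
  intro r hr s hs he
  rw [Finset.mem_Icc] at hr hs
  have hbr := sp_bounds hjmono hjd hi hr.1 hr.2
  have hbs := sp_bounds hjmono hjd hi hs.1 hs.2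
  have heq : i r = i s := iota_inj hbr.1 hbr.2 hbs.1 hbs.2 he
  by_contra hne
  rcases Nat.lt_or_ge r s with h | h
  · have := spread_strict ht hi r s hr.1 h hs.2
    omega
  · have := spread_strict ht hi s r hs.1 (by omega) hr.2
    omega

include hj1 hjmono hjd in
lemma j_inj : ∀ r ∈ Finset.Icc 1 d, ∀ s ∈ Finset.Icc 1 d,
    iota n (j r) = iota n (j s) → r = s := by
  intro r hr s hs he
  rw [Finset.mem_Icc] at hr hs
  have hbr : 1 ≤ j r ∧ j r ≤ n :=
    ⟨j_pos hj1 hjmono hr.1 hr.2, j_le_n hjmono hjd hr.1 hr.2⟩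
  have hbs : 1 ≤ j s ∧ j s ≤ n :=
    ⟨j_pos hj1 hjmono hs.1 hs.2, j_le_n hjmono hjd hs.1 hs.2⟩
  have heq : j r = j s := iota_inj hbr.1 hbr.2 hbs.1 hbs.2 he
  by_contra hne
  rcases Nat.lt_or_ge r s with h | h
  · have := hjmono r s hr.1 h hs.2
    omega
  · have := hjmono s r hs.1 (by omega) hr.2
    omega

include ht hj1 hjmono hjd hc in
lemma lemA {p q : ℕ} (hp1 : 1 ≤ p) (hpq : p < q) (hqd : q ≤ d)
    {i i' : ℕ → ℕ} (hi : i ∈ spreadIdx d t j) (hi' : i' ∈ spreadIdx d t j)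
    {μ : Fin n →₀ ℕ}
    (h1 : DD n d i ≤ μ + Finsupp.single (iota n (j p)) 1)
    (h2 : DD n d i' ≤ μ + Finsupp.single (iota n (j q)) 1) :
    ∃ i'' ∈ spreadIdx d t j, DD n d i'' ≤ μ := by
  classical
  by_cases hAi : DD n d i ≤ μ
  · exact ⟨i, hi, hAi⟩
  by_cases hAi' : DD n d i' ≤ μ
  · exact ⟨i', hi', hAi'⟩
  have hjpq : j p < j q := hjmono p q hp1 hpq hqd
  have hjpb : 1 ≤ j p ∧ j p ≤ n :=
    ⟨j_pos hj1 hjmono hp1 (by omega), j_le_n hjmono hjd hp1 (by omega)⟩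
  have hjqb : 1 ≤ j q ∧ j q ≤ n :=
    ⟨j_pos hj1 hjmono (by omega) hqd, j_le_n hjmono hjd (by omega) hqd⟩
  -- extraction
  have key : ∀ (g : ℕ → ℕ), g ∈ spreadIdx d t j → ∀ (m : ℕ), 1 ≤ m → m ≤ d →
      DD n d g ≤ μ + Finsupp.single (iota n (j m)) 1 → ¬ DD n d g ≤ μ →
      g m = j m ∧ μ (iota n (j m)) = 0 := by
    intro g hg m hm1 hmd hgle hgn
    rw [Finsupp.le_def] at hgn
    push_neg at hgn
    obtain ⟨c, hcgt⟩ := hgn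
    have hgc := (Finsupp.le_def.mp hgle) c
    rw [Finsupp.add_apply] at hgc
    have hcm : c = iota n (j m) := by
      by_contra hne
      rw [Finsupp.single_apply, if_neg (fun h => hne h.symm)] at hgc
      omega
    subst hcm
    rw [Finsupp.single_apply, if_pos rfl] at hgc
    have hle1 := DD_le_one (sp_inj ht hjmono hjd hg) (iota n (j m))
    have hμ0 : μ (iota n (j m)) = 0 := by omega
    have hD1 : DD n d g (iota n (j m)) = 1 := by omega
    obtain ⟨a, ha, hae⟩ := DD_exists (d := d) (c := iota n (j m)) (i := g) (by omega)
    rw [Finset.mem_Icc] at ha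
    have hab := sp_bounds hjmono hjd hg ha.1 ha.2
    have hjmb : 1 ≤ j m ∧ j m ≤ n :=
      ⟨j_pos hj1 hjmono hm1 hmd, j_le_n hjmono hjd hm1 hmd⟩
    have hgam : g a = j m := iota_inj hab.1 hab.2 hjmb.1 hjmb.2 hae
    have ham : a = m := slot hjmono hc hg ha.1 ha.2 hm1 hmd hgam
    subst ham
    exact ⟨hgam, hμ0⟩
  obtain ⟨hip, hμp⟩ := key i hi p hp1 (by omega) h1 hAi
  obtain ⟨hiq, hμq⟩ := key i' hi' q (by omega) hqd h2 hAi'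
  have hiotane : iota n (j p) ≠ iota n (j q) := by
    intro h
    have := iota_inj hjpb.1 hjpb.2 hjqb.1 hjqb.2 h
    omega
  -- j q is not a value of i
  have hqnoti : ∀ r ∈ Finset.Icc 1 d, i r ≠ j q := by
    intro r hr he
    have hhit := DD_hit (n := n) d i hr
    rw [he] at hhit
    have := (Finsupp.le_def.mp h1) (iota n (j q))
    rw [Finsupp.add_apply, Finsupp.single_apply, if_neg hiotane] at this
    omega
  -- j p is not a value of i'
  have hpnoti' : ∀ r ∈ Finset.Icc 1 d, i' r ≠ j p := by
    intro r hr he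
    have hhit := DD_hit (n := n) d i' hr
    rw [he] at hhit
    have := (Finsupp.le_def.mp h2) (iota n (j p))
    rw [Finsupp.add_apply, Finsupp.single_apply, if_neg (fun h => hiotane h.symm)] at this
    omega
  refine ⟨fun r => min (i r) (i' r), min_mem hi hi',
    DD_le_of (sp_inj ht hjmono hjd (min_mem hi hi')) ?_⟩
  intro r hr
  have hrIcc := hr
  rw [Finset.mem_Icc] at hr
  rcases le_or_gt (i r) (i' r) with hle | hlt
  · simp only [min_eq_left hle]
    have hne : i r ≠ j p := by
      intro he
      have hrp : r = p := slot hjmono hc hi hr.1 hr.2 hp1 (by omega) he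
      subst hrp
      have h4 := (hi'.1 r hr.1 hr.2).2
      have h5 := hpnoti' r hrIcc
      omega
    have hhit := DD_hit (n := n) d i hrIcc
    have := (Finsupp.le_def.mp h1) (iota n (i r))
    rw [Finsupp.add_apply, Finsupp.single_apply, if_neg (fun h => by
      have hb := sp_bounds hjmono hjd hi hr.1 hr.2
      exact hne (iota_inj hb.1 hb.2 hjpb.1 hjpb.2 h.symm))] at this
    omega
  · simp only [min_eq_right hlt.le]
    have hne : i' r ≠ j q := by
      intro he
      have hrq : r = q := slot hjmono hc hi' hr.1 hr.2 (by omega) hqd he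
      subst hrq
      have h4 := (hi.1 r hr.1 hr.2).2
      omega
    have hhit := DD_hit (n := n) d i' hrIcc
    have := (Finsupp.le_def.mp h2) (iota n (i' r))
    rw [Finsupp.add_apply, Finsupp.single_apply, if_neg (fun h => by
      have hb := sp_bounds hjmono hjd hi' hr.1 hr.2
      exact hne (iota_inj hb.1 hb.2 hjqb.1 hjqb.2 h.symm))] at this
    omega

include ht hj1 hjmono hjd hc in
lemma lemB {i i' : ℕ → ℕ} (hi : i ∈ spreadIdx d t j) (hi' : i' ∈ spreadIdx d t j)
    {μ : Fin n →₀ ℕ}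
    (h : DD n d i + DD n d i' ≤ DD n d j + μ + μ) :
    ∃ i'' ∈ spreadIdx d t j, DD n d i'' ≤ μ := by
  classical
  have hjinj := j_inj (n := n) hj1 hjmono hjd (d := d)
  refine ⟨fun r => min (i r) (i' r), min_mem hi hi',
    DD_le_of (sp_inj ht hjmono hjd (min_mem hi hi')) ?_⟩
  intro r hrIcc
  have hr := hrIcc
  rw [Finset.mem_Icc] at hr
  rcases le_or_gt (i r) (i' r) with hle | hlt
  · simp only [min_eq_left hle]
    by_contra hz
    have hμ0 : μ (iota n (i r)) = 0 := by omega
    have hhit := DD_hit (n := n) d i hrIcc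
    have hsum := (Finsupp.le_def.mp h) (iota n (i r))
    rw [Finsupp.add_apply, Finsupp.add_apply, Finsupp.add_apply, hμ0] at hsum
    have hjc : DD n d j (iota n (i r)) ≠ 0 := by omega
    obtain ⟨m, hm, hme⟩ := DD_exists hjc
    rw [Finset.mem_Icc] at hm
    have hb := sp_bounds hjmono hjd hi hr.1 hr.2
    have hjmb : 1 ≤ j m ∧ j m ≤ n :=
      ⟨j_pos hj1 hjmono hm.1 hm.2, j_le_n hjmono hjd hm.1 hm.2⟩
    have hjm : j m = i r := iota_inj hjmb.1 hjmb.2 hb.1 hb.2 hme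
    have hrm : r = m := slot hjmono hc hi hr.1 hr.2 hm.1 hm.2 hjm.symm
    subst hrm
    have hjle1 := DD_le_one hjinj (iota n (i r))
    have hi'c : DD n d i' (iota n (i r)) = 0 := by omega
    have hne : i' r ≠ i r := by
      intro he
      have hhit' := DD_hit (n := n) d i' hrIcc
      rw [he] at hhit'
      omega
    have h4 := (hi'.1 r hr.1 hr.2).2
    omega
  · simp only [min_eq_right hlt.le]
    by_contra hz
    have hμ0 : μ (iota n (i' r)) = 0 := by omega
    have hhit := DD_hit (n := n) d i' hrIcc
    have hsum := (Finsupp.le_def.mp h) (iota n (i' r))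
    rw [Finsupp.add_apply, Finsupp.add_apply, Finsupp.add_apply, hμ0] at hsum
    have hjc : DD n d j (iota n (i' r)) ≠ 0 := by omega
    obtain ⟨m, hm, hme⟩ := DD_exists hjc
    rw [Finset.mem_Icc] at hm
    have hb := sp_bounds hjmono hjd hi' hr.1 hr.2
    have hjmb : 1 ≤ j m ∧ j m ≤ n :=
      ⟨j_pos hj1 hjmono hm.1 hm.2, j_le_n hjmono hjd hm.1 hm.2⟩
    have hjm : j m = i' r := iota_inj hjmb.1 hjmb.2 hb.1 hb.2 hme
    have hrm : r = m := slot hjmono hc hi' hr.1 hr.2 hm.1 hm.2 hjm.symm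
    subst hrm
    have h4 := (hi.1 r hr.1 hr.2).2
    omega

end withj

end CFL
namespace CFL
set_option linter.unusedSectionVars false

open MvPolynomial

section algebra

variable {K : Type*} [Field K] {n : ℕ} [NeZero n] {d : ℕ} {t j : ℕ → ℕ}

lemma prod_X_eq (K : Type*) [Field K] (s : Finset ℕ) (g : ℕ → Fin n) :
    (∏ r ∈ s, (X (g r) : MvPolynomial (Fin n) K)) =
      monomial (∑ r ∈ s, Finsupp.single (g r) 1) 1 := by
  classical
  induction s using Finset.induction_on with
  | empty => simp
  | insert a s hns ih =>
    rw [Finset.prod_insert hns, Finset.sum_insert hns, ih, X, monomial_mul, one_mul]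

lemma monOf_eq (K : Type*) [Field K] (d : ℕ) (i : ℕ → ℕ) :
    monOf K n d i = monomial (DD n d i) (1 : K) :=
  prod_X_eq K (Finset.Icc 1 d) fun r => iota n (i r)

lemma tBorel_eq (K : Type*) [Field K] (d : ℕ) (t j : ℕ → ℕ) :
    tBorel K n d t j =
      Ideal.span ((fun s => monomial s (1 : K)) '' (DD n d '' spreadIdx d t j)) := by
  rw [tBorel, Set.image_image]
  exact congrArg Ideal.span (Set.image_congr fun i _ => monOf_eq K d i)

lemma mem_tBorel {f : MvPolynomial (Fin n) K} :
    f ∈ tBorel K n d t j ↔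
      ∀ m ∈ f.support, ∃ i ∈ spreadIdx d t j, DD n d i ≤ m := by
  rw [tBorel_eq, mem_ideal_span_monomial_image]
  constructor
  · intro h m hm
    obtain ⟨s, ⟨i, hi, rfl⟩, hle⟩ := h m hm
    exact ⟨i, hi, hle⟩
  · intro h m hm
    obtain ⟨i, hi, hle⟩ := h m hm
    exact ⟨DD n d i, ⟨i, hi, rfl⟩, hle⟩

lemma span_monomial_mul (K : Type*) [Field K] (A B : Set (Fin n →₀ ℕ)) :
    Ideal.span ((fun s => monomial s (1 : K)) '' A) *
      Ideal.span ((fun s => monomial s (1 : K)) '' B) =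
      Ideal.span ((fun s => monomial s (1 : K)) '' (Set.image2 (· + ·) A B)) := by
  rw [Ideal.span_mul_span]
  congr 1
  ext z
  simp only [Set.mem_iUnion, Set.mem_singleton_iff, Set.mem_image, Set.mem_image2,
    exists_prop]
  constructor
  · rintro ⟨x, ⟨a, ha, rfl⟩, y, ⟨b, hb, rfl⟩, rfl⟩
    exact ⟨a + b, ⟨a, ha, b, hb, rfl⟩, by beta_reduce; rw [monomial_mul, one_mul]⟩
  · rintro ⟨s, ⟨a, ha, b, hb, rfl⟩, rfl⟩
    exact ⟨monomial a 1, ⟨a, ha, rfl⟩, monomial b 1, ⟨b, hb, rfl⟩,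
      by beta_reduce; rw [monomial_mul, one_mul]⟩

lemma mem_tBorel_sq {f : MvPolynomial (Fin n) K} :
    f ∈ (tBorel K n d t j) ^ 2 ↔
      ∀ m ∈ f.support, ∃ i ∈ spreadIdx d t j, ∃ i' ∈ spreadIdx d t j,
        DD n d i + DD n d i' ≤ m := by
  rw [pow_two, tBorel_eq, span_monomial_mul, mem_ideal_span_monomial_image]
  constructor
  · intro h m hm
    obtain ⟨s, hs, hle⟩ := h m hm
    obtain ⟨a, ⟨ia, hia, rfl⟩, b, ⟨ib, hib, rfl⟩, rfl⟩ := hs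
    exact ⟨ia, hia, ib, hib, hle⟩
  · intro h m hm
    obtain ⟨ia, hia, ib, hib, hle⟩ := h m hm
    exact ⟨DD n d ia + DD n d ib,
      ⟨DD n d ia, ⟨ia, hia, rfl⟩, DD n d ib, ⟨ib, hib, rfl⟩, rfl⟩, hle⟩

end algebra

end CFL
set_option maxHeartbeats 2000000

/-- If `j i ≤ t 1 + ⋯ + t i` for all `i = 1,…,d-1`, then every associated prime `P` of
`S/B_t(u)` contains exactly one of the variables `x_{j 1},…,x_{j d}`; consequently
`u ∈ P ∖ P²` for every such `P`. -/
theorem stmt16 (K : Type*) [Field K] (n d : ℕ) [NeZero n] (t j : ℕ → ℕ)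
    (hd : 2 ≤ d) (ht : ∀ k, 1 ≤ k → k ≤ d - 1 → 1 ≤ t k)
    (hj1 : 1 ≤ j 1) (hjmono : ∀ p q, 1 ≤ p → p < q → q ≤ d → j p < j q)
    (hjd : j d = n) (hspread : ∀ k, 1 ≤ k → k ≤ d - 1 → j k + t k ≤ j (k + 1))
    (hc : ∀ r, 1 ≤ r → r ≤ d - 1 → j r ≤ ∑ s ∈ Finset.Icc 1 r, t s) :
    ∀ P ∈ associatedPrimes (MvPolynomial (Fin n) K)
        (MvPolynomial (Fin n) K ⧸ tBorel K n d t j),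
      (∃! r : ℕ, (1 ≤ r ∧ r ≤ d) ∧ xv K n (j r) ∈ P) ∧
      monOf K n d j ∈ P ∧ monOf K n d j ∉ P ^ 2 := by
  classical
  intro P hP
  obtain ⟨hPprime, x, hx⟩ := isAssociatedPrime_iff.mp hP
  obtain ⟨f, rfl⟩ := Ideal.Quotient.mk_surjective x
  haveI := hPprime
  set I := tBorel K n d t j with hIdef
  -- membership in P is a colon condition
  have hmem : ∀ g : MvPolynomial (Fin n) K, g ∈ P ↔ g * f ∈ I := by
    intro g
    rw [hx, Submodule.mem_colon_singleton, Submodule.mem_bot]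
    constructor
    · intro h
      have : Ideal.Quotient.mk I (g * f) = 0 := by
        rw [map_mul, ← h]
        rfl
      rwa [Ideal.Quotient.eq_zero_iff_mem] at this
    · intro h
      have : Ideal.Quotient.mk I (g * f) = 0 := Ideal.Quotient.eq_zero_iff_mem.mpr h
      rw [map_mul] at this
      exact this
  have hfI : f ∉ I := by
    intro h
    apply hPprime.ne_top
    rw [Ideal.eq_top_iff_one]
    exact (hmem 1).mpr (by rwa [one_mul])
  have hIP : I ≤ P := fun g hg => (hmem g).mpr (Ideal.mul_mem_right f _ hg)
  have hjsp : j ∈ spreadIdx d t j :=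
    ⟨fun r h1 h2 => ⟨CFL.j_pos hj1 hjmono h1 h2, le_rfl⟩,
     fun r h1 h2 => hspread r h1 (by omega)⟩
  have huI : monOf K n d j ∈ I := Ideal.subset_span ⟨j, hjsp, rfl⟩
  have huP : monOf K n d j ∈ P := hIP huI
  -- at least one variable
  have hprod : ∏ r ∈ Finset.Icc 1 d, xv K n (j r) ∈ P := huP
  obtain ⟨r₀, hr₀Icc, hxr₀⟩ := (Ideal.IsPrime.prod_mem_iff).mp hprod
  rw [Finset.mem_Icc] at hr₀Icc
  -- at most one variable
  have huniq2 : ∀ p q, 1 ≤ p → p < q → q ≤ d →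
      xv K n (j p) ∈ P → xv K n (j q) ∈ P → False := by
    intro p q hp1 hpq hqd hxp hxq
    have h1 : (X (CFL.iota n (j p)) : MvPolynomial (Fin n) K) * f ∈ I := (hmem _).mp hxp
    have h2 : (X (CFL.iota n (j q)) : MvPolynomial (Fin n) K) * f ∈ I := (hmem _).mp hxq
    apply hfI
    rw [hIdef, CFL.mem_tBorel]
    intro m hm
    have hs1 : Finsupp.single (CFL.iota n (j p)) 1 + m ∈
        ((X (CFL.iota n (j p)) : MvPolynomial (Fin n) K) * f).support := by
      rw [MvPolynomial.support_X_mul]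
      simpa using Finset.mem_map_of_mem
        (addLeftEmbedding (Finsupp.single (CFL.iota n (j p)) 1)) hm
    have hs2 : Finsupp.single (CFL.iota n (j q)) 1 + m ∈
        ((X (CFL.iota n (j q)) : MvPolynomial (Fin n) K) * f).support := by
      rw [MvPolynomial.support_X_mul]
      simpa using Finset.mem_map_of_mem
        (addLeftEmbedding (Finsupp.single (CFL.iota n (j q)) 1)) hm
    obtain ⟨i, hi, hile⟩ := CFL.mem_tBorel.mp h1 _ hs1
    obtain ⟨i', hi', hile'⟩ := CFL.mem_tBorel.mp h2 _ hs2
    rw [add_comm] at hile hile'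
    exact CFL.lemA ht hj1 hjmono hjd hc hp1 hpq hqd hi hi' hile hile'
  refine ⟨⟨r₀, ⟨hr₀Icc, hxr₀⟩, ?_⟩, huP, ?_⟩
  · rintro r' ⟨⟨h1', h2'⟩, hx'⟩
    by_contra hne
    rcases lt_or_gt_of_ne hne with h | h
    · exact huniq2 r' r₀ h1' h hr₀Icc.2 hx' hxr₀
    · exact huniq2 r₀ r' hr₀Icc.1 h h2' hxr₀ hx'
  -- u ∉ P²
  · intro hu2
    -- the part of f outside I
    set good : (Fin n →₀ ℕ) → Prop := fun m => ∃ i ∈ spreadIdx d t j, CFL.DD n d i ≤ m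
      with hgood
    set f' : MvPolynomial (Fin n) K :=
      ∑ m ∈ f.support.filter (fun m => ¬ good m), MvPolynomial.monomial m (MvPolynomial.coeff m f)
      with hf'def
    have hco : ∀ m, MvPolynomial.coeff m f' =
        if m ∈ f.support ∧ ¬ good m then MvPolynomial.coeff m f else 0 := by
      intro m
      rw [hf'def, MvPolynomial.coeff_sum]
      simp_rw [MvPolynomial.coeff_monomial]
      rw [Finset.sum_ite_eq' (f.support.filter (fun m => ¬ good m)) m
        (fun m' => MvPolynomial.coeff m' f)]
      simp [Finset.mem_filter]
    have hsub : f - f' ∈ I := by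
      rw [hIdef, CFL.mem_tBorel]
      intro m hm
      rw [MvPolynomial.mem_support_iff, MvPolynomial.coeff_sub, hco] at hm
      by_cases hcase : m ∈ f.support ∧ ¬ good m
      · rw [if_pos hcase] at hm
        exact absurd (sub_self _) hm
      · rw [if_neg hcase, sub_zero] at hm
        push_neg at hcase
        exact hcase (MvPolynomial.mem_support_iff.mpr hm)
    have hPf' : ∀ g ∈ P, g * f' ∈ I := by
      intro g hg
      have h1 : g * f ∈ I := (hmem g).mp hg
      have : g * f' = g * f - g * (f - f') := by ring
      rw [this]
      exact Ideal.sub_mem _ h1 (Ideal.mul_mem_left _ _ hsub)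
    have hkey : monOf K n d j * (f' * f') ∈ I ^ 2 := by
      rw [pow_two] at hu2 ⊢
      refine Submodule.mul_induction_on hu2 ?_ ?_
      · intro g hg h hh
        have := Ideal.mul_mem_mul (hPf' g hg) (hPf' h hh)
        rwa [show g * f' * (h * f') = g * h * (f' * f') by ring] at this
      · intro a b ha hb
        rw [add_mul]
        exact add_mem ha hb
    have hf'ne : f' ≠ 0 := by
      intro h
      apply hfI
      have := hsub
      rwa [h, sub_zero] at this
    obtain ⟨m₀, hm₀s, hmax⟩ := f'.support.exists_max_image
      (fun m => toLex m) (MvPolynomial.support_nonempty.mpr hf'ne)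
    have hm₀bad : ¬ good m₀ := by
      have := hco m₀
      rw [MvPolynomial.mem_support_iff] at hm₀s
      by_cases hcase : m₀ ∈ f.support ∧ ¬ good m₀
      · exact hcase.2
      · rw [if_neg hcase] at this
        exact absurd this hm₀s
    -- coefficient of the top square
    have hmaxeq : ∀ a b : Fin n →₀ ℕ, a ∈ f'.support → b ∈ f'.support →
        a + b = m₀ + m₀ → a = m₀ ∧ b = m₀ := by
      intro a b ha hb hab
      have h1 : toLex a ≤ toLex m₀ := hmax a ha
      have h2 : toLex b ≤ toLex m₀ := hmax b hb
      have h3 : toLex a + toLex b = toLex m₀ + toLex m₀ := by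
        rw [← toLex_add, ← toLex_add, hab]
      have ha' : toLex a = toLex m₀ := by
        rcases lt_or_eq_of_le h1 with h | h
        · exfalso
          have := add_lt_add_of_lt_of_le h h2
          rw [h3] at this
          exact lt_irrefl _ this
        · exact h
      have hb' : toLex b = toLex m₀ := by
        rw [ha'] at h3
        exact add_left_cancel h3
      exact ⟨toLex.injective ha', toLex.injective hb'⟩
    have hcf : MvPolynomial.coeff (m₀ + m₀) (f' * f') =
        MvPolynomial.coeff m₀ f' * MvPolynomial.coeff m₀ f' := by
      rw [MvPolynomial.coeff_mul]
      rw [Finset.sum_eq_single ((m₀, m₀) : (Fin n →₀ ℕ) × (Fin n →₀ ℕ))]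
      · rintro ⟨a, b⟩ hab hne
        rw [Finset.HasAntidiagonal.mem_antidiagonal] at hab
        by_contra hz
        have ha : a ∈ f'.support :=
          MvPolynomial.mem_support_iff.mpr (left_ne_zero_of_mul hz)
        have hb : b ∈ f'.support :=
          MvPolynomial.mem_support_iff.mpr (right_ne_zero_of_mul hz)
        obtain ⟨hA, hB⟩ := hmaxeq a b ha hb hab
        exact hne (by rw [hA, hB])
      · intro h
        exact absurd (by simp : ((m₀, m₀) : (Fin n →₀ ℕ) × (Fin n →₀ ℕ)) ∈
          Finset.HasAntidiagonal.antidiagonal (m₀ + m₀)) h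
    have hre : monOf K n d j * (f' * f') =
        MvPolynomial.monomial (CFL.DD n d j) (1 : K) * (f' * f') := by
      rw [CFL.monOf_eq]
    have hcoeff2 : MvPolynomial.coeff (CFL.DD n d j + (m₀ + m₀))
        (monOf K n d j * (f' * f')) ≠ 0 := by
      rw [hre, MvPolynomial.coeff_monomial_mul, one_mul, hcf]
      exact mul_ne_zero (MvPolynomial.mem_support_iff.mp hm₀s)
        (MvPolynomial.mem_support_iff.mp hm₀s)
    have hsupp : CFL.DD n d j + (m₀ + m₀) ∈ (monOf K n d j * (f' * f')).support :=
      MvPolynomial.mem_support_iff.mpr hcoeff2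
    obtain ⟨i, hi, i', hi', hle⟩ := CFL.mem_tBorel_sq.mp hkey _ hsupp
    rw [show CFL.DD n d j + (m₀ + m₀) = CFL.DD n d j + m₀ + m₀ by rw [add_assoc]] at hle
    obtain ⟨i'', hi'', hle''⟩ := CFL.lemB ht hj1 hjmono hjd hc hi hi' hle
    exact hm₀bad ⟨i'', hi'', hle''⟩
end

section
/- Suppose there is l in {1,...,d-1} such that j_p <= t_1 + ... + t_p for all p = 1,...,l-1 and j_l > t_1 + ... + t_l. Set a = t_1 + ... + t_{l-1} + 1 and let φ : S → K[x_a, x_{a+1},...,x_n] be the K-algebra homomorphism with φ(x_j) = 1 for j < a and φ(x_j) = x_j for j >= a. Then the monomial localization φ(B_t(u)), as an ideal of K[x_a,...,x_n], equals the ideal generated by all monomials x_{i_l} x_{i_{l+1}} ... x_{i_d} with a <= i_l, i_{p+1} - i_p >= t_p for p = l,...,d-1, and i_p <= j_p for all p = l,...,d. -/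
open Finset MvPolynomial

private lemma sumT_mono (t : ℕ → ℕ) {p q : ℕ} (h : p ≤ q) :
    ∑ s ∈ Finset.Icc 1 p, t s ≤ ∑ s ∈ Finset.Icc 1 q, t s :=
  Finset.sum_le_sum_of_subset (Finset.Icc_subset_Icc_right h)

private lemma sumT_succ (t : ℕ → ℕ) {r : ℕ} (hr : 1 ≤ r) :
    ∑ s ∈ Finset.Icc 1 r, t s = (∑ s ∈ Finset.Icc 1 (r - 1), t s) + t r := by
  obtain ⟨m, rfl⟩ : ∃ m, r = m + 1 := ⟨r - 1, by omega⟩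
  rw [Finset.sum_Icc_succ_top (by omega)]
  simp

private lemma spread_lb (t i : ℕ → ℕ) (e : ℕ) (h1 : 1 ≤ i 1)
    (hsp : ∀ r, 1 ≤ r → r + 1 ≤ e → i r + t r ≤ i (r + 1)) :
    ∀ r, 1 ≤ r → r ≤ e → 1 + ∑ s ∈ Finset.Icc 1 (r - 1), t s ≤ i r := by
  intro r
  induction r with
  | zero => omega
  | succ m ih =>
    intro _ hre
    rcases Nat.eq_zero_or_pos m with hm | hm
    · subst hm; simpa using h1
    · have h1' := ih (by omega) (by omega)
      have h2 := hsp m hm hre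
      have h3 : ∑ s ∈ Finset.Icc 1 (m + 1 - 1), t s
          = (∑ s ∈ Finset.Icc 1 (m - 1), t s) + t m := by
        simpa using sumT_succ t hm
      omega

private lemma spread_mono (t i : ℕ → ℕ) (l e : ℕ)
    (hsp : ∀ r, l ≤ r → r + 1 ≤ e → i r + t r ≤ i (r + 1)) :
    ∀ r, l ≤ r → r ≤ e → i l ≤ i r := by
  intro r
  induction r with
  | zero => intro h1 _; exact le_of_eq (by rw [Nat.le_zero.mp h1])
  | succ m ih =>
    intro h1 h2
    rcases Nat.lt_or_ge l (m + 1) with h | h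
    · have := hsp m (by omega) h2
      have := ih (by omega) (by omega)
      omega
    · exact le_of_eq (by rw [Nat.le_antisymm h h1])

/-- Suppose `l ∈ {1,…,d-1}` satisfies `j p ≤ t 1 + ⋯ + t p` for `p = 1,…,l-1` and
`j l > t 1 + ⋯ + t l`.  Set `a = t 1 + ⋯ + t (l-1) + 1` and let `φ` be the `K`-algebra map
sending `x_p ↦ 1` for `p < a` and fixing the other variables (monomial localization).
Then `φ(B_t(u))` is the ideal generated by all monomials `x_{i l} x_{i (l+1)} ⋯ x_{i d}`
with `a ≤ i l`, `i (p+1) - i p ≥ t p` for `p = l,…,d-1` and `i p ≤ j p` for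
`p = l,…,d`. -/
theorem stmt18 (K : Type*) [Field K] (n d : ℕ) [NeZero n] (t j : ℕ → ℕ)
    (hd : 2 ≤ d) (ht : ∀ k, 1 ≤ k → k ≤ d - 1 → 1 ≤ t k)
    (hj1 : 1 ≤ j 1) (hjmono : ∀ p q, 1 ≤ p → p < q → q ≤ d → j p < j q)
    (hjd : j d = n) (hspread : ∀ k, 1 ≤ k → k ≤ d - 1 → j k + t k ≤ j (k + 1))
    (l : ℕ) (hl1 : 1 ≤ l) (hld : l ≤ d - 1)
    (hbelow : ∀ p, 1 ≤ p → p ≤ l - 1 → j p ≤ ∑ s ∈ Finset.Icc 1 p, t s)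
    (habove : (∑ s ∈ Finset.Icc 1 l, t s) < j l) :
    Ideal.map
        (MvPolynomial.aeval (fun v : Fin n =>
          if (v : ℕ) + 1 < (∑ s ∈ Finset.Icc 1 (l - 1), t s) + 1 then 1
          else MvPolynomial.X v) :
          MvPolynomial (Fin n) K →ₐ[K] MvPolynomial (Fin n) K)
        (tBorel K n d t j) =
      Ideal.span ((fun i => ∏ r ∈ Finset.Icc l d, xv K n (i r)) ''
        {i : ℕ → ℕ | (∑ s ∈ Finset.Icc 1 (l - 1), t s) + 1 ≤ i l ∧
          (∀ p, l ≤ p → p ≤ d → i p ≤ j p) ∧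
          (∀ p, l ≤ p → p + 1 ≤ d → i p + t p ≤ i (p + 1))}) := by
  classical
  set T1 : ℕ := ∑ s ∈ Finset.Icc 1 (l - 1), t s with hT1
  set φ : MvPolynomial (Fin n) K →ₐ[K] MvPolynomial (Fin n) K :=
    (MvPolynomial.aeval (fun v : Fin n =>
      if (v : ℕ) + 1 < T1 + 1 then 1 else MvPolynomial.X v)) with hφ
  have hld' : l + 1 ≤ d := by omega
  -- lower bound for j
  have hjlb : ∀ r, 1 ≤ r → r ≤ d → 1 + ∑ s ∈ Finset.Icc 1 (r - 1), t s ≤ j r :=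
    spread_lb t j d hj1 (fun r h1 h2 => hspread r h1 (by omega))
  have hjub : ∀ r, 1 ≤ r → r ≤ d → j r ≤ n := by
    intro r h1 h2
    rcases eq_or_lt_of_le h2 with h | h
    · rw [h, hjd]
    · exact le_of_lt (hjd ▸ hjmono r d h1 h le_rfl)
  -- action of φ on variables
  have hφxv : ∀ p, 1 ≤ p → p ≤ n →
      φ (xv K n p) = if p < T1 + 1 then 1 else xv K n p := by
    intro p h1 h2
    have hv : ((Fin.ofNat n (p - 1 : ℕ) : Fin n) : ℕ) = p - 1 := Nat.mod_eq_of_lt (by omega)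
    rw [hφ]
    simp only [xv]
    rw [MvPolynomial.aeval_X, hv]
    have hpp : p - 1 + 1 = p := by omega
    rw [hpp]
  -- splitting products over [1,d]
  have hsplit : ∀ f : ℕ → MvPolynomial (Fin n) K,
      ∏ r ∈ Finset.Icc 1 d, f r
        = (∏ r ∈ Finset.Icc 1 (l - 1), f r) * ∏ r ∈ Finset.Icc l d, f r := by
    intro f
    have hdisj : Disjoint (Finset.Icc 1 (l - 1)) (Finset.Icc l d) := by
      rw [Finset.disjoint_left]
      intro x hx hx'
      simp only [Finset.mem_Icc] at hx hx'
      omega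
    rw [← Finset.prod_union hdisj]
    apply Finset.prod_congr _ (fun _ _ => rfl)
    ext x
    simp only [Finset.mem_union, Finset.mem_Icc]
    omega
  -- action of φ on monomials
  have hφmon : ∀ i : ℕ → ℕ,
      (∀ r, 1 ≤ r → r ≤ l - 1 → 1 ≤ i r ∧ i r < T1 + 1 ∧ i r ≤ n) →
      (∀ r, l ≤ r → r ≤ d → T1 + 1 ≤ i r ∧ i r ≤ n) →
      φ (monOf K n d i) = ∏ r ∈ Finset.Icc l d, xv K n (i r) := by
    intro i hsmall hbig
    rw [monOf, map_prod, hsplit (fun r => φ (xv K n (i r)))]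
    have h1 : (∏ r ∈ Finset.Icc 1 (l - 1), φ (xv K n (i r))) = 1 := by
      apply Finset.prod_eq_one
      intro r hr
      rw [Finset.mem_Icc] at hr
      obtain ⟨ha1, ha2, ha3⟩ := hsmall r hr.1 hr.2
      rw [hφxv _ ha1 ha3, if_pos ha2]
    have h2 : (∏ r ∈ Finset.Icc l d, φ (xv K n (i r)))
        = ∏ r ∈ Finset.Icc l d, xv K n (i r) := by
      apply Finset.prod_congr rfl
      intro r hr
      rw [Finset.mem_Icc] at hr
      obtain ⟨hb1, hb2⟩ := hbig r hr.1 hr.2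
      rw [hφxv _ (by omega) hb2, if_neg (by omega)]
    rw [h1, h2, one_mul]
  rw [tBorel, Ideal.map_span, Set.image_image]
  congr 1
  ext x
  constructor
  · rintro ⟨i, ⟨hib, hisp⟩, rfl⟩
    have hilb : ∀ r, 1 ≤ r → r ≤ d → 1 + ∑ s ∈ Finset.Icc 1 (r - 1), t s ≤ i r :=
      spread_lb t i d (hib 1 le_rfl (by omega)).1 hisp
    have hsmall : ∀ r, 1 ≤ r → r ≤ l - 1 → 1 ≤ i r ∧ i r < T1 + 1 ∧ i r ≤ n := by
      intro r h1 h2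
      have hb := hib r h1 (by omega)
      have h3 := hbelow r h1 h2
      have h4 : ∑ s ∈ Finset.Icc 1 r, t s ≤ T1 := sumT_mono t (by omega)
      have h5 := hjub r h1 (by omega)
      exact ⟨hb.1, by omega, by omega⟩
    have hbig : ∀ r, l ≤ r → r ≤ d → T1 + 1 ≤ i r ∧ i r ≤ n := by
      intro r h1 h2
      have hb := hib r (by omega) h2
      have h3 := hilb r (by omega) h2
      have h4 : T1 ≤ ∑ s ∈ Finset.Icc 1 (r - 1), t s := sumT_mono t (by omega)
      have h5 := hjub r (by omega) h2
      exact ⟨by omega, by omega⟩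
    refine ⟨i, ⟨(hbig l le_rfl (by omega)).1, fun p h1 h2 => (hib p (by omega) h2).2,
      fun p h1 h2 => hisp p (by omega) h2⟩, (hφmon i hsmall hbig).symm⟩
  · rintro ⟨i, ⟨hal, hub, hsp'⟩, rfl⟩
    have hmono := spread_mono t i l d hsp'
    refine ⟨fun r => if r < l then 1 + ∑ s ∈ Finset.Icc 1 (r - 1), t s else i r,
      ⟨?_, ?_⟩, ?_⟩
    · intro r h1 h2
      by_cases hrl : r < l
      · simp only [if_pos hrl]
        exact ⟨by omega, hjlb r h1 h2⟩
      · simp only [if_neg hrl]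
        have := hmono r (by omega) h2
        exact ⟨by omega, hub r (by omega) h2⟩
    · intro r h1 h2
      by_cases hrl : r < l
      · simp only [if_pos hrl]
        have e1 : ∑ s ∈ Finset.Icc 1 r, t s = (∑ s ∈ Finset.Icc 1 (r - 1), t s) + t r :=
          sumT_succ t h1
        by_cases hrl' : r + 1 < l
        · simp only [if_pos hrl']
          have : r + 1 - 1 = r := by omega
          rw [this]
          omega
        · simp only [if_neg hrl']
          have hrlq : r + 1 = l := by omega
          have : l - 1 = r := by omega
          rw [← hrlq] at hal
          rw [this] at hT1
          omega
      · simp only [if_neg hrl, if_neg (show ¬ r + 1 < l by omega)]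
        exact hsp' r (by omega) h2
    · have hsmall : ∀ r, 1 ≤ r → r ≤ l - 1 →
          1 ≤ (fun r => if r < l then 1 + ∑ s ∈ Finset.Icc 1 (r - 1), t s else i r) r ∧
          (fun r => if r < l then 1 + ∑ s ∈ Finset.Icc 1 (r - 1), t s else i r) r < T1 + 1 ∧
          (fun r => if r < l then 1 + ∑ s ∈ Finset.Icc 1 (r - 1), t s else i r) r ≤ n := by
        intro r h1 h2
        simp only [if_pos (show r < l by omega)]
        have e1 : T1 = (∑ s ∈ Finset.Icc 1 (l - 1 - 1), t s) + t (l - 1) :=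
          sumT_succ t (by omega)
        have e2 : ∑ s ∈ Finset.Icc 1 (r - 1), t s ≤ ∑ s ∈ Finset.Icc 1 (l - 1 - 1), t s :=
          sumT_mono t (by omega)
        have e3 : 1 ≤ t (l - 1) := ht (l - 1) (by omega) (by omega)
        have e4 := hjlb r h1 (by omega)
        have e5 := hjub r h1 (by omega)
        exact ⟨by omega, by omega, by omega⟩
      have hbig : ∀ r, l ≤ r → r ≤ d →
          T1 + 1 ≤ (fun r => if r < l then 1 + ∑ s ∈ Finset.Icc 1 (r - 1), t s else i r) r ∧
          (fun r => if r < l then 1 + ∑ s ∈ Finset.Icc 1 (r - 1), t s else i r) r ≤ n := by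
        intro r h1 h2
        simp only [if_neg (show ¬ r < l by omega)]
        have := hmono r h1 h2
        have := hub r h1 h2
        have := hjub r (by omega) h2
        exact ⟨by omega, by omega⟩
      beta_reduce
      rw [hφmon _ hsmall hbig]
      apply Finset.prod_congr rfl
      intro r hr
      rw [Finset.mem_Icc] at hr
      rw [if_neg (show ¬ r < l by omega)]
end
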